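/- arXiv:2408.14327 — 2 statements merged into one kernel-verified Lean document; each statement's English description precedes it below -/
import Mathlib

section
/- Let G be the pushforward of the symmetric Dirichlet distribution Dir_K(α) under the map L(β) = Σ_{k=1}^K β_k θ_k, where θ_1,...,θ_K ∈ Δ^{V-1} are affinely independent, so that S = conv{θ_1,...,θ_K} has dimension K−1. Then there is a constant C = C(K, α) > 0 such that for every η ∈ S and every 0 < ε < 1/K: G(B(η, ε) ∩ S) ≥ C ε^{K−1} if α ≤ 1, and G(B(η, ε) ∩ S) ≥ C ε^{αK−1} if α > 1. -/
open MeasureTheory ProbabilityTheory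

/-- The symmetric Dirichlet distribution `Dir_K(α)` on the simplex, realized as the
pushforward of a vector of i.i.d. Gamma(α,1) random variables under normalization. -/
noncomputable def dirichletSym (K : ℕ) (α : ℝ) : Measure (Fin K → ℝ) :=
  Measure.map (fun g k => g k / ∑ j, g j)
    (Measure.pi fun _ : Fin K => gammaMeasure α 1)

open Real

lemma gamma_Ico_lower {α : ℝ} (hα : 0 < α) {u w : ℝ} (hu : 0 ≤ u) (hw : 0 < w)
    (h4 : u + w ≤ 4) :
    ENNReal.ofReal ((Real.Gamma α)⁻¹ * Real.exp (-4) * min ((4:ℝ) ^ (α - 1)) 1 *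
        ((2:ℝ) ^ (max α 1))⁻¹ * w ^ (max α 1)) ≤
      gammaMeasure α 1 (Set.Ico u (u + w)) := by
  set m := max α 1 with hm
  set A := min ((4:ℝ) ^ (α - 1)) 1 with hA
  have hA0 : 0 < A := lt_min (rpow_pos_of_pos (by norm_num) _) one_pos
  have hΓ : 0 < Real.Gamma α := Real.Gamma_pos_of_pos hα
  -- pointwise lower bound on the sub-interval
  have hsub : Set.Ico (u + w / 2) (u + w) ⊆ Set.Ico u (u + w) := by
    apply Set.Ico_subset_Ico_left; linarith
  have key : ∀ x ∈ Set.Ico (u + w / 2) (u + w),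
      ENNReal.ofReal ((Real.Gamma α)⁻¹ * (A * (w / 2) ^ (m - 1)) * Real.exp (-4)) ≤
        gammaPDF α 1 x := by
    intro x hx
    obtain ⟨hx1, hx2⟩ := hx
    have hxpos : 0 < x := by nlinarith
    have hx4 : x ≤ 4 := by linarith
    rw [gammaPDF_of_nonneg hxpos.le]
    apply ENNReal.ofReal_le_ofReal
    have h1 : Real.exp (-4) ≤ Real.exp (-(1 * x)) := by
      apply Real.exp_le_exp.mpr; nlinarith
    have h2 : A * (w / 2) ^ (m - 1) ≤ x ^ (α - 1) := by
      rcases le_or_gt α 1 with h | h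
      · have hmeq : m = 1 := max_eq_right h
        rw [hmeq]; simp only [sub_self, rpow_zero, mul_one]
        have : A = (4:ℝ) ^ (α - 1) := min_eq_left (by
          apply rpow_le_one_of_one_le_of_nonpos <;> [norm_num; linarith])
        rw [this]
        exact rpow_le_rpow_of_nonpos hxpos hx4 (by linarith)
      · have hmeq : m = α := max_eq_left h.le
        rw [hmeq]
        have hA1 : A = 1 := min_eq_right (Real.one_le_rpow (by norm_num) (by linarith))
        rw [hA1, one_mul]
        apply rpow_le_rpow (by linarith) (by linarith) (by linarith)
    have hrp : (1:ℝ) ^ α = 1 := one_rpow α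
    rw [hrp]
    calc (Real.Gamma α)⁻¹ * (A * (w / 2) ^ (m - 1)) * Real.exp (-4)
        ≤ (Real.Gamma α)⁻¹ * x ^ (α - 1) * Real.exp (-(1 * x)) := by
          apply mul_le_mul
          · apply mul_le_mul_of_nonneg_left h2 (by positivity)
          · exact h1
          · positivity
          · positivity
      _ = 1 / Real.Gamma α * x ^ (α - 1) * Real.exp (-(1 * x)) := by rw [one_div]
  -- integrate
  rw [gammaMeasure, withDensity_apply _ measurableSet_Ico]
  calc ENNReal.ofReal ((Real.Gamma α)⁻¹ * Real.exp (-4) * A * ((2:ℝ) ^ m)⁻¹ * w ^ m)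
      = ENNReal.ofReal ((Real.Gamma α)⁻¹ * (A * (w / 2) ^ (m - 1)) * Real.exp (-4)) *
          ENNReal.ofReal (w / 2) := by
        rw [← ENNReal.ofReal_mul (by positivity)]
        congr 1
        have hw2 : (0:ℝ) < w / 2 := by linarith
        have h2 : (w / 2 : ℝ) ^ (m - 1) * (w / 2) = (w / 2) ^ m := by
          rw [← Real.rpow_add_one hw2.ne']; ring_nf
        have h3 : (w / 2 : ℝ) ^ m = w ^ m / 2 ^ m := Real.div_rpow hw.le (by norm_num : (0:ℝ) ≤ 2) m
        calc (Real.Gamma α)⁻¹ * Real.exp (-4) * A * ((2:ℝ) ^ m)⁻¹ * w ^ m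
            = (Real.Gamma α)⁻¹ * Real.exp (-4) * A * (w ^ m / 2 ^ m) := by ring
          _ = (Real.Gamma α)⁻¹ * Real.exp (-4) * A * ((w / 2) ^ (m - 1) * (w / 2)) := by
              rw [h2, h3]
          _ = (Real.Gamma α)⁻¹ * (A * (w / 2) ^ (m - 1)) * Real.exp (-4) * (w / 2) := by ring
    _ = ENNReal.ofReal ((Real.Gamma α)⁻¹ * (A * (w / 2) ^ (m - 1)) * Real.exp (-4)) *
          volume (Set.Ico (u + w / 2) (u + w)) := by
        rw [Real.volume_Ico]; congr 1; ring_nf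
    _ ≤ ∫⁻ x in Set.Ico (u + w / 2) (u + w), gammaPDF α 1 x := by
        rw [← MeasureTheory.setLIntegral_const]
        exact setLIntegral_mono (measurable_gammaPDFReal α 1).ennreal_ofReal key
    _ ≤ ∫⁻ x in Set.Ico u (u + w), gammaPDF α 1 x :=
        lintegral_mono_set hsub

lemma exp_half_lt_two : Real.exp (1/2 : ℝ) < 2 := by
  have he : Real.exp (1/2 : ℝ) * Real.exp (1/2 : ℝ) = Real.exp 1 := by
    rw [← Real.exp_add]; norm_num
  nlinarith [Real.exp_one_lt_d9, Real.exp_pos (1/2 : ℝ)]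

set_option maxHeartbeats 1000000 in
lemma dirichlet_mass_lower {V K : ℕ} (α : ℝ) (hα : 0 < α)
    (θ : Fin K → EuclideanSpace ℝ (Fin V))
    (hθ : ∀ k, (∀ v, 0 ≤ θ k v) ∧ ∑ v, θ k v = 1) :
    ∃ C : ℝ, 0 < C ∧
      ∀ η ∈ convexHull ℝ (Set.range θ), ∀ ε : ℝ, 0 < ε → ε < 1 / K →
          ENNReal.ofReal (C * ε ^ ((max α 1) * K - 1)) ≤
            (Measure.map (fun β : Fin K → ℝ => ∑ k, β k • θ k) (dirichletSym K α))
              (Metric.ball η ε ∩ convexHull ℝ (Set.range θ)) := by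
  classical
  haveI hprob : IsProbabilityMeasure (gammaMeasure α 1) := isProbabilityMeasure_gammaMeasure hα one_pos
  rcases Nat.eq_zero_or_pos K with hK0 | hK
  · refine ⟨1, one_pos, fun η hη ε hε hεK => absurd hεK (by subst hK0; simp; linarith)⟩
  have hKpos : (0:ℝ) < K := by exact_mod_cast hK
  have hK1 : (1:ℝ) ≤ K := by exact_mod_cast hK
  haveI : Nonempty (Fin K) := ⟨⟨0, hK⟩⟩
  set m := max α 1 with hm
  have hm1 : (1:ℝ) ≤ m := le_max_right _ _
  have hm0 : (0:ℝ) < m := by linarith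
  set A := min ((4:ℝ) ^ (α - 1)) 1 with hA
  have hApos : 0 < A := lt_min (rpow_pos_of_pos (by norm_num) _) one_pos
  have hΓ : 0 < Real.Gamma α := Real.Gamma_pos_of_pos hα
  set c0 := (Real.Gamma α)⁻¹ * Real.exp (-4) * A * ((2:ℝ) ^ m)⁻¹ with hc0
  have hc0pos : 0 < c0 := by
    have h2m : (0:ℝ) < (2:ℝ) ^ m := rpow_pos_of_pos (by norm_num) _
    positivity
  set C := 2 * (K:ℝ) * c0 ^ K / ((4 * (K:ℝ)^2) ^ (m * K)) with hC
  have hCpos : 0 < C := by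
    have h4K : (0:ℝ) < (4 * (K:ℝ)^2) ^ (m * K) := rpow_pos_of_pos (by positivity) _
    positivity
  refine ⟨C, hCpos, ?_⟩
  intro η hη ε hε hεK
  -- barycentric weights of η
  obtain ⟨a, ha0, ha1, haθ⟩ : ∃ a : Fin K → ℝ, (∀ k, 0 ≤ a k) ∧ (∑ k, a k = 1) ∧
      (∑ k, a k • θ k = η) := by
    rw [convexHull_range_eq_exists_affineCombination] at hη
    obtain ⟨t, w, hw0, hw1, hwx⟩ := hη
    refine ⟨fun k => if k ∈ t then w k else 0, fun k => ?_, ?_, ?_⟩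
    · by_cases hk : k ∈ t
      · simpa [hk] using hw0 k hk
      · simp [hk]
    · rw [Finset.sum_ite_mem, Finset.univ_inter, hw1]
    · rw [← hwx, Finset.affineCombination_eq_linear_combination t θ w hw1]
      calc ∑ k, (if k ∈ t then w k else 0) • θ k
          = ∑ k, (if k ∈ t then w k • θ k else 0) := by
            apply Finset.sum_congr rfl; intro k _; split <;> simp
        _ = ∑ i ∈ t, w i • θ i := by rw [Finset.sum_ite_mem, Finset.univ_inter]
  have ha_le1 : ∀ k, a k ≤ 1 := fun k =>
    ha1 ▸ Finset.single_le_sum (fun j _ => ha0 j) (Finset.mem_univ k)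
  -- vertices have norm at most 1
  have hθn : ∀ k, ‖θ k‖ ≤ 1 := by
    intro k
    obtain ⟨hpos, hsum⟩ := hθ k
    rw [EuclideanSpace.norm_eq]
    have h1 : ∑ v, ‖θ k v‖ ^ 2 ≤ 1 := by
      calc ∑ v, ‖θ k v‖ ^ 2 ≤ ∑ v, θ k v := by
            apply Finset.sum_le_sum
            intro v _
            rw [Real.norm_eq_abs, abs_of_nonneg (hpos v), sq]
            have hle1 : θ k v ≤ 1 :=
              hsum ▸ Finset.single_le_sum (fun j _ => hpos j) (Finset.mem_univ v)
            nlinarith [hpos v]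
        _ = 1 := hsum
    calc Real.sqrt (∑ v, ‖θ k v‖ ^ 2) ≤ Real.sqrt 1 := Real.sqrt_le_sqrt h1
      _ = 1 := Real.sqrt_one
  -- parameters
  set δ := ε / (4 * (K:ℝ)^2) with hδ
  have hδpos : 0 < δ := by positivity
  have hε1 : ε < 1 := lt_of_lt_of_le hεK (by rw [div_le_one hKpos]; exact hK1)
  have hδ1 : δ ≤ 1 := by rw [hδ, div_le_one (by positivity)]; nlinarith
  set s : ℕ → ℝ := fun n => (1 + (K:ℝ) * δ) ^ n with hs
  have hbase : (1:ℝ) ≤ 1 + (K:ℝ) * δ := by nlinarith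
  have hs1 : ∀ n, 1 ≤ s n := fun n => one_le_pow₀ hbase
  have hspos : ∀ n, 0 < s n := fun n => lt_of_lt_of_le one_pos (hs1 n)
  obtain ⟨Nn, hNnlb, hnKδ⟩ : ∃ Nn : ℕ, 2 * (K:ℝ) / ε ≤ (Nn : ℝ) ∧
      ∀ n : ℕ, n < Nn → (n:ℝ) * ((K:ℝ) * δ) ≤ 1 / 2 := by
    refine ⟨Nat.floor (1 / (2 * (K:ℝ) * δ)) + 1, ?_, ?_⟩
    · have h1 : 1 / (2 * (K:ℝ) * δ) < ((Nat.floor (1 / (2 * (K:ℝ) * δ)) + 1 : ℕ) : ℝ) := by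
        push_cast; exact Nat.lt_floor_add_one _
      have h2 : 1 / (2 * (K:ℝ) * δ) = 2 * (K:ℝ) / ε := by
        rw [hδ]; field_simp; ring
      linarith
    · intro n hn
      have h1 : n ≤ Nat.floor (1 / (2 * (K:ℝ) * δ)) := Nat.lt_succ_iff.mp hn
      have hn' : (n:ℝ) ≤ 1 / (2 * (K:ℝ) * δ) := by
        calc (n:ℝ) ≤ (Nat.floor (1 / (2 * (K:ℝ) * δ)) : ℝ) := by exact_mod_cast h1
          _ ≤ 1 / (2 * (K:ℝ) * δ) := Nat.floor_le (by positivity)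
      rw [le_div_iff₀ (by positivity : (0:ℝ) < 2 * (K:ℝ) * δ)] at hn'
      nlinarith
  have hsle2 : ∀ n ∈ Finset.range Nn, s n ≤ 2 := by
    intro n hn
    have hnKδ' := hnKδ n (Finset.mem_range.mp hn)
    have hexp2 : Real.exp (1/2 : ℝ) < 2 := exp_half_lt_two
    calc s n ≤ Real.exp ((K:ℝ) * δ) ^ n := by
          apply pow_le_pow_left₀ (by linarith) ?_ n
          have := Real.add_one_le_exp ((K:ℝ) * δ)
          linarith
      _ = Real.exp ((n:ℝ) * ((K:ℝ) * δ)) := by rw [← Real.exp_nat_mul]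
      _ ≤ Real.exp (1/2 : ℝ) := Real.exp_le_exp.mpr hnKδ'
      _ ≤ 2 := hexp2.le
  -- boxes
  set B : ℕ → Set (Fin K → ℝ) := fun n =>
    Set.pi Set.univ (fun k => Set.Ico (s n * a k) (s n * (a k + δ))) with hB
  have hBmeas : ∀ n ∈ Finset.range Nn, MeasurableSet (B n) := fun n _ =>
    MeasurableSet.univ_pi fun k => measurableSet_Ico
  -- a coordinate with large weight
  obtain ⟨k0, hk0⟩ : ∃ k0, 1 / (K:ℝ) ≤ a k0 := by
    by_contra hcon
    push_neg at hcon
    have : (1:ℝ) < 1 := by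
      calc (1:ℝ) = ∑ k, a k := ha1.symm
        _ < ∑ _k : Fin K, 1 / (K:ℝ) := Finset.sum_lt_sum_of_nonempty Finset.univ_nonempty
            (fun k _ => hcon k)
        _ = (K:ℝ) * (1 / (K:ℝ)) := by
            rw [Finset.sum_const, Finset.card_univ, Fintype.card_fin, nsmul_eq_mul]
        _ = 1 := by field_simp
    exact absurd this (lt_irrefl 1)
  -- disjointness
  have hdisjlt : ∀ i j : ℕ, i < j → Disjoint (B i) (B j) := by
    intro i j hij
    rw [Set.disjoint_left]
    intro g hgi hgj
    have h1 : g k0 ∈ Set.Ico (s i * a k0) (s i * (a k0 + δ)) := hgi k0 (Set.mem_univ _)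
    have h2 : g k0 ∈ Set.Ico (s j * a k0) (s j * (a k0 + δ)) := hgj k0 (Set.mem_univ _)
    have key : s i * (a k0 + δ) ≤ s j * a k0 := by
      have hKa : 1 ≤ (K:ℝ) * a k0 := by
        rw [div_le_iff₀ hKpos] at hk0; linarith [hk0]
      have step1 : s i * (a k0 + δ) ≤ s i * ((1 + (K:ℝ) * δ) * a k0) := by
        apply mul_le_mul_of_nonneg_left _ (hspos i).le
        have h1 : δ * 1 ≤ δ * ((K:ℝ) * a k0) := mul_le_mul_of_nonneg_left hKa hδpos.le
        nlinarith [h1]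
      have step2 : s i * ((1 + (K:ℝ) * δ) * a k0) = s (i+1) * a k0 := by
        simp only [hs, pow_succ]; ring
      have step3 : s (i+1) ≤ s j := pow_le_pow_right₀ hbase hij
      calc s i * (a k0 + δ) ≤ s (i+1) * a k0 := by rw [← step2]; exact step1
        _ ≤ s j * a k0 := mul_le_mul_of_nonneg_right step3 (ha0 k0)
    have := h1.2
    have := h2.1
    linarith
  have hdisj : (↑(Finset.range Nn) : Set ℕ).PairwiseDisjoint B := by
    intro i _ j _ hij
    rcases hij.lt_or_gt with h | h
    · exact hdisjlt i j h
    · exact (hdisjlt j i h).symm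
  -- the boxes land in the target set
  set T := Metric.ball η ε ∩ convexHull ℝ (Set.range θ) with hT
  set L := fun β : Fin K → ℝ => ∑ k, β k • θ k with hL
  set Nmap := fun g : Fin K → ℝ => fun k => g k / ∑ j, g j with hNmap
  have hsubset : ∀ n ∈ Finset.range Nn, B n ⊆ (L ∘ Nmap) ⁻¹' T := by
    intro n _ g hg
    have hglb : ∀ k, s n * a k ≤ g k := fun k => (hg k (Set.mem_univ _)).1
    have hgub : ∀ k, g k < s n * (a k + δ) := fun k => (hg k (Set.mem_univ _)).2
    have hg0 : ∀ k, 0 ≤ g k := fun k =>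
      le_trans (mul_nonneg (hspos n).le (ha0 k)) (hglb k)
    set S := ∑ j, g j with hS
    have hSlb : s n ≤ S := by
      calc s n = ∑ k, s n * a k := by rw [← Finset.mul_sum, ha1, mul_one]
        _ ≤ S := Finset.sum_le_sum fun k _ => hglb k
    have hSub : S ≤ s n * (1 + (K:ℝ) * δ) := by
      calc S ≤ ∑ k, s n * (a k + δ) := Finset.sum_le_sum fun k _ => (hgub k).le
        _ = s n * (1 + (K:ℝ) * δ) := by
            rw [← Finset.mul_sum, Finset.sum_add_distrib, ha1, Finset.sum_const,
              Finset.card_univ, Fintype.card_fin, nsmul_eq_mul]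
    have hSpos : 0 < S := lt_of_lt_of_le (hspos n) hSlb
    have hβa : ∀ k, |g k / S - a k| ≤ (K:ℝ) * δ := by
      intro k
      have hnum : g k / S - a k = (g k - a k * S) / S := by
        field_simp
      rw [hnum, abs_div, abs_of_pos hSpos, div_le_iff₀ hSpos]
      have haS : a k * s n ≤ a k * S := mul_le_mul_of_nonneg_left hSlb (ha0 k)
      have hub : g k - a k * S ≤ s n * δ := by nlinarith [hgub k]
      have hlb : -(s n * ((K:ℝ) * δ)) ≤ g k - a k * S := by
        have : a k * S ≤ a k * (s n * (1 + (K:ℝ) * δ)) :=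
          mul_le_mul_of_nonneg_left hSub (ha0 k)
        nlinarith [hglb k, ha_le1 k, hspos n, hδpos, ha0 k]
      have hmul : s n * ((K:ℝ) * δ) ≤ S * ((K:ℝ) * δ) :=
        mul_le_mul_of_nonneg_right hSlb (by positivity)
      have hmul2 : s n * δ ≤ s n * ((K:ℝ) * δ) :=
        mul_le_mul_of_nonneg_left (le_mul_of_one_le_left hδpos.le hK1) (hspos n).le
      rw [abs_le]
      constructor
      · linarith
      · linarith
    constructor
    · -- in the ball
      show L (Nmap g) ∈ Metric.ball η ε
      rw [Metric.mem_ball, dist_eq_norm]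
      have hdiff : L (Nmap g) - η = ∑ k, (g k / S - a k) • θ k := by
        rw [← haθ]
        show (∑ k, (g k / ∑ j, g j) • θ k) - ∑ k, a k • θ k = _
        rw [← hS, ← Finset.sum_sub_distrib]
        apply Finset.sum_congr rfl
        intro k _
        rw [sub_smul]
      rw [hdiff]
      have hKKδ : (K:ℝ) * ((K:ℝ) * δ) = ε / 4 := by
        rw [hδ]; field_simp
      calc ‖∑ k, (g k / S - a k) • θ k‖ ≤ ∑ k, ‖(g k / S - a k) • θ k‖ :=
            norm_sum_le _ _
        _ ≤ ∑ _k : Fin K, (K:ℝ) * δ := by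
            apply Finset.sum_le_sum
            intro k _
            rw [norm_smul, Real.norm_eq_abs]
            calc |g k / S - a k| * ‖θ k‖ ≤ ((K:ℝ) * δ) * 1 :=
                  mul_le_mul (hβa k) (hθn k) (norm_nonneg _) (by positivity)
              _ = (K:ℝ) * δ := mul_one _
        _ = (K:ℝ) * ((K:ℝ) * δ) := by
            rw [Finset.sum_const, Finset.card_univ, Fintype.card_fin, nsmul_eq_mul]
        _ < ε := by rw [hKKδ]; linarith
    · -- in the convex hull
      show L (Nmap g) ∈ convexHull ℝ (Set.range θ)
      have hw1 : ∑ k, g k / S = 1 := by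
        rw [← Finset.sum_div, ← hS, div_self hSpos.ne']
      have hmem := Finset.univ.centerMass_mem_convexHull (w := fun k => g k / S)
          (z := θ) (fun i _ => div_nonneg (hg0 i) hSpos.le)
          (by rw [hw1]; exact one_pos) (fun i _ => Set.mem_range_self i)
      rw [Finset.centerMass_eq_of_sum_1 _ _ hw1] at hmem
      exact hmem
  -- measurability
  have hLc : Continuous L :=
    continuous_finset_sum _ fun k _ => (continuous_apply k).smul continuous_const
  have hLm : Measurable L := hLc.measurable
  have hNm : Measurable Nmap := measurable_pi_lambda _ fun k =>
    (measurable_pi_apply k).div (Finset.measurable_sum Finset.univ fun j _ =>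
      measurable_pi_apply j)
  have hTmeas : MeasurableSet T :=
    Metric.isOpen_ball.measurableSet.inter
      (((Set.finite_range θ).isCompact_convexHull ℝ).isClosed.measurableSet)
  have hmap : (Measure.map L (dirichletSym K α)) T
      = (Measure.pi fun _ : Fin K => gammaMeasure α 1) ((L ∘ Nmap) ⁻¹' T) := by
    unfold dirichletSym
    rw [Measure.map_map hLm hNm, Measure.map_apply (hLm.comp hNm) hTmeas]
  -- per-box lower bound
  have hbox : ∀ n ∈ Finset.range Nn,
      ENNReal.ofReal (c0 * δ ^ m) ^ K ≤
        (Measure.pi fun _ : Fin K => gammaMeasure α 1) (B n) := by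
    intro n hn
    rw [hB, Measure.pi_pi]
    have hfac : ∀ k : Fin K, ENNReal.ofReal (c0 * δ ^ m) ≤
        gammaMeasure α 1 (Set.Ico (s n * a k) (s n * (a k + δ))) := by
      intro k
      have heq : s n * (a k + δ) = s n * a k + s n * δ := by ring
      rw [heq]
      refine le_trans ?_ (gamma_Ico_lower hα (mul_nonneg (hspos n).le (ha0 k))
        (by positivity) ?_)
      · apply ENNReal.ofReal_le_ofReal
        have hδm : δ ^ m ≤ (s n * δ) ^ m :=
          Real.rpow_le_rpow hδpos.le (le_mul_of_one_le_left hδpos.le (hs1 n)) hm0.le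
        exact mul_le_mul_of_nonneg_left hδm hc0pos.le
      · nlinarith [hsle2 n hn, ha_le1 k, hδ1, hspos n, ha0 k, hδpos]
    calc ENNReal.ofReal (c0 * δ ^ m) ^ K
        = ∏ _k : Fin K, ENNReal.ofReal (c0 * δ ^ m) := by
          rw [Finset.prod_const, Finset.card_univ, Fintype.card_fin]
      _ ≤ ∏ k, gammaMeasure α 1 (Set.Ico (s n * a k) (s n * (a k + δ))) :=
          Finset.prod_le_prod' fun k _ => hfac k
  -- final arithmetic
  have hreal : C * ε ^ (m * (K:ℝ) - 1) ≤ (Nn:ℝ) * (c0 * δ ^ m) ^ K := by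
    have e2 : ((δ ^ m) ^ K : ℝ) = δ ^ (m * (K:ℝ)) := by
      rw [← Real.rpow_natCast (δ ^ m) K, ← Real.rpow_mul hδpos.le]
    have e3 : δ ^ (m * (K:ℝ)) = ε ^ (m * (K:ℝ)) / (4 * (K:ℝ)^2) ^ (m * (K:ℝ)) := by
      rw [hδ, Real.div_rpow hε.le (by positivity)]
    have e4 : ε ^ (m * (K:ℝ) - 1) = ε ^ (m * (K:ℝ)) / ε := by
      rw [Real.rpow_sub hε, Real.rpow_one]
    have hQ : (0:ℝ) ≤ c0 ^ K * (ε ^ (m * (K:ℝ)) / (4 * (K:ℝ)^2) ^ (m * (K:ℝ))) := by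
      have h1 : (0:ℝ) < ε ^ (m * (K:ℝ)) := Real.rpow_pos_of_pos hε _
      have h2 : (0:ℝ) < (4 * (K:ℝ)^2) ^ (m * (K:ℝ)) := Real.rpow_pos_of_pos (by positivity) _
      positivity
    calc C * ε ^ (m * (K:ℝ) - 1)
        = (2 * (K:ℝ) / ε) * (c0 ^ K * (ε ^ (m * (K:ℝ)) / (4 * (K:ℝ)^2) ^ (m * (K:ℝ)))) := by
          rw [hC, e4]; ring
      _ ≤ (Nn:ℝ) * (c0 ^ K * (ε ^ (m * (K:ℝ)) / (4 * (K:ℝ)^2) ^ (m * (K:ℝ)))) :=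
          mul_le_mul_of_nonneg_right hNnlb hQ
      _ = (Nn:ℝ) * (c0 * δ ^ m) ^ K := by
          have h5 : (c0 * δ ^ m) ^ K = c0 ^ K * (δ ^ m) ^ K := mul_pow _ _ _
          rw [h5, e2, e3]
  calc ENNReal.ofReal (C * ε ^ (m * (K:ℝ) - 1))
      ≤ ENNReal.ofReal ((Nn:ℝ) * (c0 * δ ^ m) ^ K) := ENNReal.ofReal_le_ofReal hreal
    _ = (Nn : ENNReal) * ENNReal.ofReal ((c0 * δ ^ m) ^ K) := by
        rw [ENNReal.ofReal_mul (Nat.cast_nonneg _), ENNReal.ofReal_natCast]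
    _ = ∑ _n ∈ Finset.range Nn, ENNReal.ofReal ((c0 * δ ^ m) ^ K) := by
        rw [Finset.sum_const, Finset.card_range, nsmul_eq_mul]
    _ = ∑ _n ∈ Finset.range Nn, ENNReal.ofReal (c0 * δ ^ m) ^ K := by
        rw [ENNReal.ofReal_pow (by positivity)]
    _ ≤ ∑ n ∈ Finset.range Nn, (Measure.pi fun _ : Fin K => gammaMeasure α 1) (B n) :=
        Finset.sum_le_sum hbox
    _ = (Measure.pi fun _ : Fin K => gammaMeasure α 1) (⋃ n ∈ Finset.range Nn, B n) :=
        (measure_biUnion_finset hdisj hBmeas).symm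
    _ ≤ (Measure.pi fun _ : Fin K => gammaMeasure α 1) ((L ∘ Nmap) ⁻¹' T) :=
        measure_mono (Set.iUnion₂_subset hsubset)
    _ = (Measure.map L (dirichletSym K α)) T := hmap.symm

theorem dirichlet_pushforward_small_ball_mass {V K : ℕ} (α : ℝ) (hα : 0 < α)
    (θ : Fin K → EuclideanSpace ℝ (Fin V))
    (hθ : ∀ k, (∀ v, 0 ≤ θ k v) ∧ ∑ v, θ k v = 1)
    (hind : AffineIndependent ℝ θ) :
    ∃ C : ℝ, 0 < C ∧
      ∀ η ∈ convexHull ℝ (Set.range θ), ∀ ε : ℝ, 0 < ε → ε < 1 / K →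
        (α ≤ 1 →
          ENNReal.ofReal (C * ε ^ ((K : ℝ) - 1)) ≤
            (Measure.map (fun β : Fin K → ℝ => ∑ k, β k • θ k) (dirichletSym K α))
              (Metric.ball η ε ∩ convexHull ℝ (Set.range θ))) ∧
        (1 < α →
          ENNReal.ofReal (C * ε ^ (α * K - 1)) ≤
            (Measure.map (fun β : Fin K → ℝ => ∑ k, β k • θ k) (dirichletSym K α))
              (Metric.ball η ε ∩ convexHull ℝ (Set.range θ))) := by
  obtain ⟨C, hC, h⟩ := dirichlet_mass_lower α hα θ hθ
  refine ⟨C, hC, ?_⟩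
  intro η hη ε hε hεK
  have hmain := h η hη ε hε hεK
  constructor
  · intro h1
    have hm : max α 1 = 1 := max_eq_right h1
    rw [hm, one_mul] at hmain
    exact hmain
  · intro h1
    have hm : max α 1 = α := max_eq_left h1.le
    rw [hm] at hmain
    exact hmain
end

section
/- Let G = Σ_{i=1}^I π_i G_i and G' = Σ_{i=1}^I π'_i G'_i be mixtures of probability measures on R^d, where each G_i is absolutely continuous with respect to the Hausdorff measure on an affine subspace A_i (with G_i supported on a compact convex subset of A_i of full dimension in A_i), each π_i > 0, and similarly for G'. Suppose all A_i are pairwise distinct and no A_i is contained in A_j for i ≠ j, and the same for the A'_i. If G = G', then I-component-wise identification holds: there is a permutation σ of [I] such that A_i = A'_{σ(i)}, G_i = G'_{σ(i)}, and π_i = π'_{σ(i)} for all i. -/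
open MeasureTheory Module Set
open scoped ENNReal NNReal

lemma dimH_affineSubspace_le {d : ℕ} (B : AffineSubspace ℝ (Fin d → ℝ)) :
    dimH (B : Set (Fin d → ℝ)) ≤ (finrank ℝ B.direction : ℝ≥0∞) := by
  rcases (B : Set (Fin d → ℝ)).eq_empty_or_nonempty with h | ⟨p, hp⟩
  · simp [h]
  · have hiso : Isometry (fun v : B.direction => (v : Fin d → ℝ) +ᵥ p) := by
      exact (IsometryEquiv.vaddConst p).isometry.comp (fun x y => rfl)
    have hsub : (B : Set (Fin d → ℝ)) ⊆
        (fun v : B.direction => (v : Fin d → ℝ) +ᵥ p) '' Set.univ := by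
      intro x hx
      refine ⟨⟨x -ᵥ p, AffineSubspace.vsub_mem_direction hx hp⟩, trivial, ?_⟩
      simp
    calc dimH (B : Set (Fin d → ℝ))
        ≤ dimH ((fun v : B.direction => (v : Fin d → ℝ) +ᵥ p) '' Set.univ) := dimH_mono hsub
      _ = dimH (Set.univ : Set B.direction) := hiso.dimH_image _
      _ = (finrank ℝ B.direction : ℝ≥0∞) := Real.dimH_univ_eq_finrank _

lemma hausdorff_affine_zero {d n : ℕ} (B : AffineSubspace ℝ (Fin d → ℝ))
    (h : finrank ℝ B.direction < n) :
    μH[(n : ℝ)] (B : Set (Fin d → ℝ)) = 0 := by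
  have : μH[((n : ℝ≥0) : ℝ)] (B : Set (Fin d → ℝ)) = 0 := by
    apply hausdorffMeasure_of_dimH_lt
    refine lt_of_le_of_lt (dimH_affineSubspace_le B) ?_
    exact_mod_cast h
  simpa using this

lemma measure_affineSubspace_zero {d : ℕ} {B C : AffineSubspace ℝ (Fin d → ℝ)}
    {ν : Measure (Fin d → ℝ)}
    (hν : ν ≪ μH[(finrank ℝ C.direction : ℝ)])
    (hconc : ν ((C : Set (Fin d → ℝ)))ᶜ = 0)
    (hnle : ¬ C ≤ B) : ν (B : Set (Fin d → ℝ)) = 0 := by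
  have hBC : ν ((B : Set (Fin d → ℝ)) ∩ (C : Set (Fin d → ℝ))) = 0 := by
    by_contra h
    obtain ⟨p, hpB, hpC⟩ := nonempty_of_measure_ne_zero h
    have hfin : ¬ finrank ℝ (B ⊓ C).direction < finrank ℝ C.direction := by
      intro hlt
      have h0 : μH[(finrank ℝ C.direction : ℝ)] ((B ⊓ C : AffineSubspace ℝ (Fin d → ℝ)) :
          Set (Fin d → ℝ)) = 0 := hausdorff_affine_zero _ hlt
      have hset : ((B ⊓ C : AffineSubspace ℝ (Fin d → ℝ)) : Set (Fin d → ℝ)) =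
          (B : Set (Fin d → ℝ)) ∩ (C : Set (Fin d → ℝ)) := rfl
      exact h (hset ▸ hν h0)
    have hle : (B ⊓ C).direction ≤ C.direction := AffineSubspace.direction_le inf_le_right
    have hdeq : (B ⊓ C).direction = C.direction :=
      Submodule.eq_of_le_of_finrank_le hle (by omega)
    have hp' : p ∈ B ⊓ C := ⟨hpB, hpC⟩
    have heqBC : B ⊓ C = C := AffineSubspace.ext_of_direction_eq hdeq ⟨p, hp', hpC⟩
    exact hnle (heqBC ▸ inf_le_left)
  refine measure_mono_null ?_ (measure_union_null hBC hconc)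
  intro x hx
  by_cases h : x ∈ (C : Set (Fin d → ℝ))
  · exact Or.inl ⟨hx, h⟩
  · exact Or.inr h

theorem mixture_of_measures_on_affine_subspaces_identifiable {d I : ℕ}
    (G G' : Fin I → Measure (Fin d → ℝ))
    (A A' : Fin I → AffineSubspace ℝ (Fin d → ℝ))
    (S S' : Fin I → Set (Fin d → ℝ))
    (π π' : Fin I → ℝ)
    (hprob : ∀ i, IsProbabilityMeasure (G i))
    (hprob' : ∀ i, IsProbabilityMeasure (G' i))
    (hS : ∀ i, IsCompact (S i) ∧ Convex ℝ (S i) ∧ S i ⊆ (A i : Set (Fin d → ℝ)) ∧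
      affineSpan ℝ (S i) = A i)
    (hS' : ∀ i, IsCompact (S' i) ∧ Convex ℝ (S' i) ∧ S' i ⊆ (A' i : Set (Fin d → ℝ)) ∧
      affineSpan ℝ (S' i) = A' i)
    (hsupp : ∀ i, G i (S i)ᶜ = 0) (hsupp' : ∀ i, G' i (S' i)ᶜ = 0)
    (hac : ∀ i, G i ≪ μH[(Module.finrank ℝ (A i).direction : ℝ)])
    (hac' : ∀ i, G' i ≪ μH[(Module.finrank ℝ (A' i).direction : ℝ)])
    (hπ : ∀ i, 0 < π i) (hπ' : ∀ i, 0 < π' i)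
    (hπs : ∑ i, π i = 1) (hπ's : ∑ i, π' i = 1)
    (hdist : ∀ i j, i ≠ j → ¬ A i ≤ A j)
    (hdist' : ∀ i j, i ≠ j → ¬ A' i ≤ A' j)
    (heq : (∑ i, ENNReal.ofReal (π i) • G i) = ∑ i, ENNReal.ofReal (π' i) • G' i) :
    ∃ σ : Equiv.Perm (Fin I), ∀ i,
      A i = A' (σ i) ∧ G i = G' (σ i) ∧ π i = π' (σ i) := by
  classical
  have hAm : ∀ i, MeasurableSet (A i : Set (Fin d → ℝ)) := fun i =>
    (A i).closed_of_finiteDimensional.measurableSet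
  have hA'm : ∀ i, MeasurableSet (A' i : Set (Fin d → ℝ)) := fun i =>
    (A' i).closed_of_finiteDimensional.measurableSet
  have hconc : ∀ i, G i ((A i : Set (Fin d → ℝ)))ᶜ = 0 := fun i =>
    measure_mono_null (Set.compl_subset_compl.2 (hS i).2.2.1) (hsupp i)
  have hconc' : ∀ i, G' i ((A' i : Set (Fin d → ℝ)))ᶜ = 0 := fun i =>
    measure_mono_null (Set.compl_subset_compl.2 (hS' i).2.2.1) (hsupp' i)
  have hGA : ∀ i, G i (A i : Set (Fin d → ℝ)) = 1 := by
    intro i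
    have h1 := measure_add_measure_compl (μ := G i) (hAm i)
    rw [hconc i, add_zero, measure_univ] at h1
    exact h1
  have hGA' : ∀ i, G' i (A' i : Set (Fin d → ℝ)) = 1 := by
    intro i
    have h1 := measure_add_measure_compl (μ := G' i) (hA'm i)
    rw [hconc' i, add_zero, measure_univ] at h1
    exact h1
  have happ : ∀ E : Set (Fin d → ℝ),
      ∑ k, ENNReal.ofReal (π k) * G k E = ∑ k, ENNReal.ofReal (π' k) * G' k E := by
    intro E
    have h1 := congrArg (fun μ : Measure (Fin d → ℝ) => μ E) heq
    simpa [Measure.finset_sum_apply, Measure.smul_apply, smul_eq_mul] using h1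
  have hofne : ∀ i, ENNReal.ofReal (π i) ≠ 0 := fun i => by
    simp [ENNReal.ofReal_eq_zero, not_le, hπ i]
  have hofne' : ∀ i, ENNReal.ofReal (π' i) ≠ 0 := fun i => by
    simp [ENNReal.ofReal_eq_zero, not_le, hπ' i]
  -- cross containment lemmas
  have hcross' : ∀ (B : AffineSubspace ℝ (Fin d → ℝ)) k,
      G' k (B : Set (Fin d → ℝ)) ≠ 0 → A' k ≤ B := by
    intro B k h
    by_contra hn
    exact h (measure_affineSubspace_zero (hac' k) (hconc' k) hn)
  have hcross : ∀ (B : AffineSubspace ℝ (Fin d → ℝ)) k,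
      G k (B : Set (Fin d → ℝ)) ≠ 0 → A k ≤ B := by
    intro B k h
    by_contra hn
    exact h (measure_affineSubspace_zero (hac k) (hconc k) hn)
  -- existence of nonzero cross terms
  have hex : ∀ i, ∃ j, G' j (A i : Set (Fin d → ℝ)) ≠ 0 := by
    intro i
    by_contra hn
    push_neg at hn
    have hRHS : ∑ k, ENNReal.ofReal (π' k) * G' k (A i : Set (Fin d → ℝ)) = 0 :=
      Finset.sum_eq_zero fun k _ => by rw [hn k, mul_zero]
    have h1 := (happ (A i : Set (Fin d → ℝ))).trans hRHS
    have h2 : ENNReal.ofReal (π i) * G i (A i : Set (Fin d → ℝ)) = 0 :=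
      (Finset.sum_eq_zero_iff.1 h1) i (Finset.mem_univ i)
    rw [hGA i, mul_one] at h2
    exact hofne i h2
  have hex' : ∀ j, ∃ i, G i (A' j : Set (Fin d → ℝ)) ≠ 0 := by
    intro j
    by_contra hn
    push_neg at hn
    have hLHS : ∑ k, ENNReal.ofReal (π k) * G k (A' j : Set (Fin d → ℝ)) = 0 :=
      Finset.sum_eq_zero fun k _ => by rw [hn k, mul_zero]
    have h1 := (happ (A' j : Set (Fin d → ℝ))).symm.trans hLHS
    have h2 : ENNReal.ofReal (π' j) * G' j (A' j : Set (Fin d → ℝ)) = 0 :=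
      (Finset.sum_eq_zero_iff.1 h1) j (Finset.mem_univ j)
    rw [hGA' j, mul_one] at h2
    exact hofne' j h2
  -- the matching
  have key : ∀ i, ∃ j, A i = A' j := by
    intro i
    obtain ⟨j, hj⟩ := hex i
    have hle1 : A' j ≤ A i := hcross' _ j hj
    obtain ⟨i', hi'⟩ := hex' j
    have hle2 : A i' ≤ A' j := hcross _ i' hi'
    have hii : i' = i := by
      by_contra hne
      exact hdist i' i hne (hle2.trans hle1)
    subst hii
    exact ⟨j, le_antisymm hle2 hle1⟩
  let f : Fin I → Fin I := fun i => (key i).choose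
  have hf : ∀ i, A i = A' (f i) := fun i => (key i).choose_spec
  have finj : Function.Injective f := by
    intro a b hab
    by_contra hne
    exact hdist a b hne (by rw [hf a, hab, ← hf b])
  have fbij : Function.Bijective f := Finite.injective_iff_bijective.1 finj
  refine ⟨Equiv.ofBijective f fbij, fun i => ?_⟩
  have hσ : (Equiv.ofBijective f fbij) i = f i := rfl
  rw [hσ]
  set j := f i with hj
  have hAeq : A i = A' j := hf i
  -- restriction identity
  have hres : ∀ E : Set (Fin d → ℝ), E ⊆ (A i : Set (Fin d → ℝ)) →
      ENNReal.ofReal (π i) * G i E = ENNReal.ofReal (π' j) * G' j E := by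
    intro E hE
    have h1 := happ E
    have hL : ∑ k, ENNReal.ofReal (π k) * G k E = ENNReal.ofReal (π i) * G i E := by
      refine Finset.sum_eq_single i (fun k _ hk => ?_) (fun h => absurd (Finset.mem_univ i) h)
      have hz : G k (A i : Set (Fin d → ℝ)) = 0 :=
        measure_affineSubspace_zero (hac k) (hconc k) (hdist k i hk)
      rw [measure_mono_null hE hz, mul_zero]
    have hR : ∑ k, ENNReal.ofReal (π' k) * G' k E = ENNReal.ofReal (π' j) * G' j E := by
      refine Finset.sum_eq_single j (fun k _ hk => ?_) (fun h => absurd (Finset.mem_univ j) h)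
      have hz : G' k (A' j : Set (Fin d → ℝ)) = 0 :=
        measure_affineSubspace_zero (hac' k) (hconc' k) (hdist' k j hk)
      rw [measure_mono_null (hAeq ▸ hE) hz, mul_zero]
    rw [hL, hR] at h1
    exact h1
  have hπeq : π i = π' j := by
    have h1 := hres (A i : Set (Fin d → ℝ)) (subset_refl _)
    rw [hGA i, mul_one, hAeq, hGA' j, mul_one] at h1
    exact (ENNReal.ofReal_eq_ofReal_iff (hπ i).le (hπ' j).le).1 h1
  refine ⟨hAeq, ?_, hπeq⟩
  ext E hE
  have h1 : G i E = G i (E ∩ (A i : Set (Fin d → ℝ))) := by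
    have h2 := measure_inter_add_diff (μ := G i) E (hAm i)
    have hd : G i (E \ (A i : Set (Fin d → ℝ))) = 0 :=
      measure_mono_null (fun x hx => hx.2) (hconc i)
    rw [hd, add_zero] at h2
    exact h2.symm
  have h1' : G' j E = G' j (E ∩ (A i : Set (Fin d → ℝ))) := by
    have h2 := measure_inter_add_diff (μ := G' j) E (hA'm j)
    have hd : G' j (E \ (A' j : Set (Fin d → ℝ))) = 0 :=
      measure_mono_null (fun x hx => hx.2) (hconc' j)
    rw [hd, add_zero] at h2
    rw [← hAeq] at h2
    exact h2.symm
  rw [h1, h1']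
  have h3 := hres (E ∩ (A i : Set (Fin d → ℝ))) Set.inter_subset_right
  rw [← hπeq] at h3
  exact (ENNReal.mul_right_inj (hofne i) ENNReal.ofReal_ne_top).1 h3
end
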